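/- Let H be a group with finite symmetric generating set S whose word metric is δ-hyperbolic. There exists a constant C ≥ 0, depending only on H, S and δ, such that for every h ∈ H the following holds: if u, c ∈ H are such that h = c⁻¹uc, u is a conjugacy minimal element of the conjugacy class of h, and |c| is minimal among word lengths of all elements conjugating h to some conjugacy minimal element of its conjugacy class, then 2|c| + |u| ≤ |h| + C. -/

import Mathlib

open Set

/-- The word length of `h` with respect to the generating set `S`: the least `n` such
that `h` is a product of `n` elements of `S`. -/
noncomputable def wordLength {H : Type*} [Group H] (S : Set H) (h : H) : ℕ :=
  sInf {n | ∃ l : List H, l.length = n ∧ (∀ x ∈ l, x ∈ S) ∧ l.prod = h}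

/-- The word metric: `d(a,b) = |a⁻¹ b|`. -/
noncomputable def wordDist {H : Type*} [Group H] (S : Set H) (a b : H) : ℕ :=
  wordLength S (a⁻¹ * b)

/-- `g : {0,…,n} → H` is a discrete geodesic (of length `n`) in the word metric:
`d(g i, g j) = |i − j|` for all `i, j ≤ n`. -/
def IsDiscreteGeodesic {H : Type*} [Group H] (S : Set H) (g : ℕ → H) (n : ℕ) : Prop :=
  ∀ i j : ℕ, i ≤ j → j ≤ n → wordDist S (g i) (g j) = j - i

/-- The Gromov product `(x,y)_z = ½(d(x,z) + d(y,z) − d(x,y))` in the word metric. -/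
noncomputable def gromovProd {H : Type*} [Group H] (S : Set H) (x y z : H) : ℝ :=
  ((wordDist S x z : ℝ) + (wordDist S y z : ℝ) - (wordDist S x y : ℝ)) / 2

/-- The word metric of `(H,S)` is `δ`-hyperbolic: geodesic triangles in the Cayley graph
are `δ`-thin, i.e. for any `x, y, z`, any discrete geodesics `f` from `z` to `x` and `g`
from `z` to `y`, and any `i` with `i ≤ (x,y)_z`, one has `d(f i, g i) ≤ δ`. -/
def WordHyperbolic {H : Type*} [Group H] (S : Set H) (δ : ℝ) : Prop :=
  ∀ (x y z : H) (f g : ℕ → H),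
    f 0 = z → f (wordDist S z x) = x → IsDiscreteGeodesic S f (wordDist S z x) →
    g 0 = z → g (wordDist S z y) = y → IsDiscreteGeodesic S g (wordDist S z y) →
    ∀ i : ℕ, i ≤ wordDist S z x → i ≤ wordDist S z y →
      (i : ℝ) ≤ gromovProd S x y z →
      (wordDist S (f i) (g i) : ℝ) ≤ δ

/-- `h` is `κ`-almost conjugacy minimal: `|h| ≤ |h'| + κ` for every conjugate `h'` of
`h` in `H`. -/
def AlmostConjMin {H : Type*} [Group H] (S : Set H) (κ : ℝ) (h : H) : Prop :=
  ∀ g : H, (wordLength S h : ℝ) ≤ (wordLength S (g⁻¹ * h * g) : ℝ) + κ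

/-- `h` is conjugacy minimal: `|h| ≤ |h'|` for every conjugate `h'` of `h` in `H`. -/
def ConjMin {H : Type*} [Group H] (S : Set H) (h : H) : Prop :=
  ∀ g : H, wordLength S h ≤ wordLength S (g⁻¹ * h * g)

section Aux

variable {H : Type*} [Group H] {S : Set H}

lemma myExistsWord (hSsym : ∀ s ∈ S, s⁻¹ ∈ S) (hSgen : Subgroup.closure S = ⊤) (g : H) :
    ∃ l : List H, (∀ x ∈ l, x ∈ S) ∧ l.prod = g := by
  have hg : g ∈ (Subgroup.closure S).toSubmonoid := by
    rw [hSgen]; trivial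
  rw [Subgroup.closure_toSubmonoid] at hg
  obtain ⟨l, hl, hprod⟩ := Submonoid.exists_list_of_mem_closure hg
  refine ⟨l, fun x hx => ?_, hprod⟩
  rcases hl x hx with h | h
  · exact h
  · have := hSsym _ (by simpa using h : x⁻¹ ∈ S)
    simpa using this

lemma myWLle (l : List H) (hl : ∀ x ∈ l, x ∈ S) : wordLength S l.prod ≤ l.length :=
  Nat.sInf_le ⟨l, rfl, hl, rfl⟩

lemma myWLspec (hSsym : ∀ s ∈ S, s⁻¹ ∈ S) (hSgen : Subgroup.closure S = ⊤) (g : H) :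
    ∃ l : List H, l.length = wordLength S g ∧ (∀ x ∈ l, x ∈ S) ∧ l.prod = g := by
  have hne : {n | ∃ l : List H, l.length = n ∧ (∀ x ∈ l, x ∈ S) ∧ l.prod = g}.Nonempty := by
    obtain ⟨l, hl, hp⟩ := myExistsWord hSsym hSgen g
    exact ⟨l.length, l, rfl, hl, hp⟩
  exact Nat.sInf_mem hne

lemma myWLone : wordLength S (1 : H) = 0 :=
  Nat.le_zero.mp (by simpa using myWLle (S := S) [] (by simp))

lemma myWLmul (hSsym : ∀ s ∈ S, s⁻¹ ∈ S) (hSgen : Subgroup.closure S = ⊤) (a b : H) :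
    wordLength S (a * b) ≤ wordLength S a + wordLength S b := by
  obtain ⟨la, hla, hma, hpa⟩ := myWLspec hSsym hSgen a
  obtain ⟨lb, hlb, hmb, hpb⟩ := myWLspec hSsym hSgen b
  have := myWLle (S := S) (la ++ lb) (by
    intro x hx; rcases List.mem_append.mp hx with h | h
    exacts [hma x h, hmb x h])
  simpa [hpa, hpb, hla, hlb] using this

lemma myWLinv_le (hSsym : ∀ s ∈ S, s⁻¹ ∈ S) (hSgen : Subgroup.closure S = ⊤) (a : H) :
    wordLength S a⁻¹ ≤ wordLength S a := by
  obtain ⟨l, hl, hm, hp⟩ := myWLspec hSsym hSgen a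
  have hmem : ∀ x ∈ (l.map fun y => y⁻¹).reverse, x ∈ S := by
    intro x hx
    simp only [List.mem_reverse, List.mem_map] at hx
    obtain ⟨y, hy, rfl⟩ := hx
    exact hSsym _ (hm y hy)
  have := myWLle (S := S) ((l.map fun y => y⁻¹).reverse) hmem
  rw [← List.prod_inv_reverse, hp] at this
  simpa [hl] using this

lemma myWLinv (hSsym : ∀ s ∈ S, s⁻¹ ∈ S) (hSgen : Subgroup.closure S = ⊤) (a : H) :
    wordLength S a⁻¹ = wordLength S a :=
  le_antisymm (myWLinv_le hSsym hSgen a)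
    (by simpa using myWLinv_le hSsym hSgen a⁻¹)

lemma myDistSymm (hSsym : ∀ s ∈ S, s⁻¹ ∈ S) (hSgen : Subgroup.closure S = ⊤) (a b : H) :
    wordDist S a b = wordDist S b a := by
  unfold wordDist
  rw [← myWLinv hSsym hSgen (a⁻¹ * b)]
  simp [mul_comm]

lemma myDistTri (hSsym : ∀ s ∈ S, s⁻¹ ∈ S) (hSgen : Subgroup.closure S = ⊤) (a b c : H) :
    wordDist S a c ≤ wordDist S a b + wordDist S b c := by
  have : a⁻¹ * c = (a⁻¹ * b) * (b⁻¹ * c) := by group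
  unfold wordDist
  rw [this]
  exact myWLmul hSsym hSgen _ _

lemma myDistLeft (g a b : H) : wordDist S (g * a) (g * b) = wordDist S a b := by
  unfold wordDist
  congr 1
  group

lemma myDistOne (a : H) : wordDist S 1 a = wordLength S a := by
  unfold wordDist; rw [inv_one, one_mul]

end Aux

section Geo

variable {H : Type*} [Group H] {S : Set H}

lemma myGeoExists (hSsym : ∀ s ∈ S, s⁻¹ ∈ S) (hSgen : Subgroup.closure S = ⊤) (a b : H) :
    ∃ f : ℕ → H, f 0 = a ∧ f (wordDist S a b) = b ∧
      IsDiscreteGeodesic S f (wordDist S a b) := by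
  obtain ⟨l, hlen, hmem, hprod⟩ := myWLspec hSsym hSgen (a⁻¹ * b)
  have hn : wordDist S a b = l.length := by rw [wordDist, ← hlen]
  refine ⟨fun i => a * (l.take i).prod, by simp, ?_, ?_⟩
  · rw [hn]
    simp [List.take_length, hprod]
  · intro i j hij hj
    rw [hn] at hj
    have hval : wordDist S (a * (l.take i).prod) (a * (l.take j).prod)
        = wordLength S ((l.drop i).take (j - i)).prod := by
      rw [myDistLeft]
      unfold wordDist
      congr 1
      have htake : l.take j = l.take i ++ (l.drop i).take (j - i) := by
        have : j = i + (j - i) := by omega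
        rw [this, List.take_add]; simp
      rw [htake, List.prod_append]
      group
    rw [hval]
    have hmid_mem : ∀ x ∈ (l.drop i).take (j - i), x ∈ S := fun x hx =>
      hmem x (List.drop_subset _ _ (List.take_subset _ _ hx))
    have hmid_len : ((l.drop i).take (j - i)).length = j - i := by
      rw [List.length_take, List.length_drop]
      omega
    have hle : wordLength S ((l.drop i).take (j - i)).prod ≤ j - i := by
      have := myWLle _ hmid_mem
      rwa [hmid_len] at this
    have hge : j - i ≤ wordLength S ((l.drop i).take (j - i)).prod := by
      have hsplit : a⁻¹ * b = (l.take i).prod * ((l.drop i).take (j - i)).prod *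
          (l.drop j).prod := by
        rw [← hprod]
        have h1 : l = l.take j ++ l.drop j := (List.take_append_drop j l).symm
        have htake : l.take j = l.take i ++ (l.drop i).take (j - i) := by
          have : j = i + (j - i) := by omega
          rw [this, List.take_add]; simp
        conv_lhs => rw [h1, htake]
        rw [List.prod_append, List.prod_append]
      have h1 : wordLength S (a⁻¹ * b) ≤
          wordLength S ((l.take i).prod * ((l.drop i).take (j - i)).prod)
          + wordLength S (l.drop j).prod := by
        rw [hsplit]; exact myWLmul hSsym hSgen _ _
      have h2 : wordLength S ((l.take i).prod * ((l.drop i).take (j - i)).prod) ≤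
          wordLength S (l.take i).prod + wordLength S ((l.drop i).take (j - i)).prod :=
        myWLmul hSsym hSgen _ _
      have h3 : wordLength S (l.take i).prod ≤ i := by
        have := myWLle (S := S) (l.take i) (fun x hx => hmem x (List.take_subset _ _ hx))
        have hlen' : (l.take i).length ≤ i := by simp [List.length_take]
        omega
      have h4 : wordLength S (l.drop j).prod ≤ l.length - j := by
        have := myWLle (S := S) (l.drop j) (fun x hx => hmem x (List.drop_subset _ _ hx))
        have hlen' : (l.drop j).length = l.length - j := by simp
        omega
      have h5 : wordLength S (a⁻¹ * b) = l.length := hlen ▸ rfl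
      omega
    omega

lemma myGeoRev {f : ℕ → H} {n : ℕ} (hSsym : ∀ s ∈ S, s⁻¹ ∈ S)
    (hSgen : Subgroup.closure S = ⊤) (hf : IsDiscreteGeodesic S f n) :
    IsDiscreteGeodesic S (fun t => f (n - t)) n := by
  intro i j hij hj
  simp only
  rw [myDistSymm hSsym hSgen]
  rw [hf (n - j) (n - i) (by omega) (by omega)]
  omega

lemma myGeoTrans {f : ℕ → H} {n : ℕ} (g : H) (hf : IsDiscreteGeodesic S f n) :
    IsDiscreteGeodesic S (fun t => g * f t) n := by
  intro i j hij hj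
  simp only [myDistLeft]
  exact hf i j hij hj

end Geo

section Thin

variable {H : Type*} [Group H] {S : Set H} {δ : ℝ}

lemma myThin (hSsym : ∀ s ∈ S, s⁻¹ ∈ S) (hSgen : Subgroup.closure S = ⊤)
    (hhyp : WordHyperbolic S δ) (x y z : H) (f g : ℕ → H) (dx dy : ℕ)
    (hdx : wordDist S z x = dx) (hdy : wordDist S z y = dy)
    (hf0 : f 0 = z) (hfx : f dx = x) (hf : IsDiscreteGeodesic S f dx)
    (hg0 : g 0 = z) (hgy : g dy = y) (hg : IsDiscreteGeodesic S g dy)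
    (i : ℕ) (hix : i ≤ dx) (hiy : i ≤ dy)
    (hprod : 2 * (i : ℝ) ≤ (dx : ℝ) + (dy : ℝ) - (wordDist S x y : ℝ)) :
    (wordDist S (f i) (g i) : ℝ) ≤ δ := by
  subst hdx
  subst hdy
  apply hhyp x y z f g hf0 hfx hf hg0 hgy hg i hix hiy
  unfold gromovProd
  rw [myDistSymm hSsym hSgen x z, myDistSymm hSsym hSgen y z]
  linarith

end Thin

section Ball

variable {H : Type*} [Group H] {S : Set H}

lemma myBallFinite (hSfin : S.Finite) (hSsym : ∀ s ∈ S, s⁻¹ ∈ S)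
    (hSgen : Subgroup.closure S = ⊤) (R : ℕ) :
    {g : H | wordLength S g ≤ R}.Finite := by
  haveI := hSfin.to_subtype
  have hfin : {l : List S | l.length ≤ R}.Finite := List.finite_length_le _ R
  have hsub : {g : H | wordLength S g ≤ R} ⊆
      (fun l : List S => (l.map Subtype.val).prod) '' {l : List S | l.length ≤ R} := by
    intro g hg
    obtain ⟨l, hlen, hmem, hprod⟩ := myWLspec hSsym hSgen g
    refine ⟨l.attach.map fun x => (⟨x.1, hmem _ x.2⟩ : S), by simpa using hlen ▸ hg, ?_⟩
    have : ((l.attach.map fun x => (⟨x.1, hmem _ x.2⟩ : S)).map Subtype.val) = l := by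
      simp [List.map_map, Function.comp]
    show (List.map Subtype.val (List.map (fun x => (⟨x.1, hmem _ x.2⟩ : S)) l.attach)).prod = g
    rw [this, hprod]
  exact (hfin.image _).subset hsub

end Ball


set_option maxHeartbeats 2000000 in
/-- Let `H` be a group with finite symmetric generating set `S` whose
word metric is `δ`-hyperbolic. There is a constant `C ≥ 0`, depending only on `H`, `S`,
`δ`, such that for all `h, u, c ∈ H` with `h = c⁻¹uc`, `u` conjugacy minimal in the
conjugacy class of `h`, and `|c|` minimal among lengths of elements conjugating `h` to a
conjugacy minimal element of its class, one has `2|c| + |u| ≤ |h| + C`. -/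
theorem stmt6 {H : Type*} [Group H] (S : Set H) (δ : ℝ)
    (hSfin : S.Finite) (hSsym : ∀ s ∈ S, s⁻¹ ∈ S) (hSgen : Subgroup.closure S = ⊤)
    (hδ : 0 ≤ δ) (hhyp : WordHyperbolic S δ) :
    ∃ C : ℝ, 0 ≤ C ∧
      ∀ h u c : H, h = c⁻¹ * u * c → ConjMin S u →
        (∀ c' u' : H, h = c'⁻¹ * u' * c' → ConjMin S u' →
          wordLength S c ≤ wordLength S c') →
        2 * (wordLength S c : ℝ) + (wordLength S u : ℝ) ≤ (wordLength S h : ℝ) + C := by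
  classical
  set Δ : ℕ := ⌈δ⌉₊ with hΔdef
  have hδΔ : δ ≤ (Δ : ℝ) := Nat.le_ceil δ
  set R₀ : ℕ := 6 * Δ + 2 with hR₀def
  have hball := myBallFinite hSfin hSsym hSgen R₀
  set N : ℕ := hball.toFinset.card with hNdef
  refine ⟨((2 * N + 20 * Δ + 30 : ℕ) : ℝ), by positivity, ?_⟩
  intro h u c hconj hu hmin
  set k := wordLength S c with hkdef
  set μ := wordLength S u with hμdef
  set n := wordLength S h with hndef
  -- basic distance identities
  have hz7 : wordDist S 1 c⁻¹ = k := by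
    rw [myDistOne, myWLinv hSsym hSgen]
  have hz9 : wordDist S 1 h = n := myDistOne h
  have hzq : wordDist S 1 u = μ := myDistOne u
  set D₁ := wordDist S 1 (c⁻¹ * u) with hD₁def
  have hz1 : wordDist S c⁻¹ 1 = k := (myDistSymm hSsym hSgen c⁻¹ 1).trans hz7
  have hz2 : wordDist S c⁻¹ (c⁻¹ * u) = μ := by
    unfold wordDist
    have e1 : (c⁻¹)⁻¹ * (c⁻¹ * u) = u := by group
    rw [e1]
  have hz3 : wordDist S (c⁻¹ * u) 1 = D₁ :=
    (myDistSymm hSsym hSgen (c⁻¹ * u) 1).trans hD₁def.symm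
  have hz4 : wordDist S (c⁻¹ * u) c⁻¹ = μ :=
    (myDistSymm hSsym hSgen (c⁻¹ * u) c⁻¹).trans hz2
  have hcalc : h⁻¹ * (c⁻¹ * u) = c⁻¹ := by rw [hconj]; group
  have hz5 : wordDist S (c⁻¹ * u) h = k := by
    rw [myDistSymm hSsym hSgen]
    unfold wordDist
    rw [hcalc, myWLinv hSsym hSgen]
  have hz5' : wordDist S h (c⁻¹ * u) = k := by
    rw [myDistSymm hSsym hSgen]; exact hz5
  have hz8 : wordDist S c⁻¹ c⁻¹ = 0 := by
    unfold wordDist; rw [inv_mul_cancel]; exact myWLone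
  -- basic inequalities (ℕ)
  have hμn : μ ≤ n := by
    have := hu c
    rw [← hconj] at this
    exact this
  have hD₁kμ : D₁ ≤ k + μ := by
    rw [hD₁def, myDistOne]
    calc wordLength S (c⁻¹ * u) ≤ wordLength S c⁻¹ + wordLength S u :=
          myWLmul hSsym hSgen _ _
      _ = k + μ := by rw [myWLinv hSsym hSgen]
  have hkD₁μ : k ≤ D₁ + μ := by
    have h1 := myWLmul hSsym hSgen (c⁻¹ * u) u⁻¹
    have e1 : (c⁻¹ * u) * u⁻¹ = c⁻¹ := by group
    rw [e1, myWLinv hSsym hSgen c, myWLinv hSsym hSgen u] at h1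
    rw [hD₁def, myDistOne]
    exact h1
  have hμkD₁ : μ ≤ k + D₁ := by
    have h1 := myWLmul hSsym hSgen c (c⁻¹ * u)
    have e1 : c * (c⁻¹ * u) = u := by group
    rw [e1] at h1
    rw [hD₁def, myDistOne]
    exact h1
  have hD₁nk : D₁ ≤ n + k := by
    have h1 := myWLmul hSsym hSgen h c⁻¹
    have e1 : h * c⁻¹ = c⁻¹ * u := by rw [hconj]; group
    rw [e1, myWLinv hSsym hSgen c] at h1
    rw [hD₁def, myDistOne]
    exact h1
  -- geodesics
  obtain ⟨f, hf0, hfk, hfgeo⟩ := myGeoExists hSsym hSgen 1 c⁻¹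
  rw [hz7] at hfk hfgeo
  obtain ⟨q, hq0, hqμ, hqgeo⟩ := myGeoExists hSsym hSgen 1 u
  rw [hzq] at hqμ hqgeo
  obtain ⟨e, he0, heD, hegeo⟩ := myGeoExists hSsym hSgen 1 (c⁻¹ * u)
  rw [← hD₁def] at heD hegeo
  obtain ⟨r, hr0, hrk, hrgeo⟩ := myGeoExists hSsym hSgen h (c⁻¹ * u)
  rw [hz5'] at hrk hrgeo
  -- the minimality facts (M)
  have hM : ∀ s, s ≤ μ → k ≤ wordDist S 1 (c⁻¹ * q s) ∧ k ≤ wordDist S h (c⁻¹ * q s) := by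
    intro s hs
    have hqs : wordLength S (q s) = s := by
      have := hqgeo 0 s (Nat.zero_le _) hs
      rw [hq0, myDistOne] at this
      simpa using this
    have hqs' : wordLength S ((q s)⁻¹ * u) = μ - s := by
      have := hqgeo s μ hs le_rfl
      rw [hqμ] at this
      simpa [wordDist] using this
    have huconj : ConjMin S ((q s)⁻¹ * u * q s) := by
      intro g
      have h1 : wordLength S ((q s)⁻¹ * u * q s) ≤ μ := by
        have := myWLmul hSsym hSgen ((q s)⁻¹ * u) (q s)
        rw [hqs, hqs'] at this
        omega
      have h2 : μ ≤ wordLength S (g⁻¹ * ((q s)⁻¹ * u * q s) * g) := by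
        calc μ ≤ wordLength S ((q s * g)⁻¹ * u * (q s * g)) := hu (q s * g)
          _ = wordLength S (g⁻¹ * ((q s)⁻¹ * u * q s) * g) := by congr 1; group
      omega
    constructor
    · have hkey : h = ((q s)⁻¹ * c)⁻¹ * ((q s)⁻¹ * u * q s) * ((q s)⁻¹ * c) := by
        rw [hconj]; group
      have hm1 := hmin _ _ hkey huconj
      calc k ≤ wordLength S ((q s)⁻¹ * c) := hm1
        _ = wordDist S 1 (c⁻¹ * q s) := by
            rw [myDistOne, ← myWLinv hSsym hSgen (c⁻¹ * q s)]
            congr 1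
            group
    · have hkey : h = ((q s)⁻¹ * u * c)⁻¹ * ((q s)⁻¹ * u * q s) * ((q s)⁻¹ * u * c) := by
        rw [hconj]; group
      have hm1 := hmin _ _ hkey huconj
      calc k ≤ wordLength S ((q s)⁻¹ * u * c) := hm1
        _ = wordDist S h (c⁻¹ * q s) := by
            unfold wordDist
            rw [← myWLinv hSsym hSgen (h⁻¹ * (c⁻¹ * q s))]
            congr 1
            rw [hconj]; group
  -- casts
  have hμkD₁' : (μ : ℝ) ≤ (k : ℝ) + D₁ := by exact_mod_cast hμkD₁
  have hkD₁μ' : (k : ℝ) ≤ (D₁ : ℝ) + μ := by exact_mod_cast hkD₁μ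
  have hD₁kμ' : (D₁ : ℝ) ≤ (k : ℝ) + μ := by exact_mod_cast hD₁kμ
  have hD₁nk' : (D₁ : ℝ) ≤ (n : ℝ) + k := by exact_mod_cast hD₁nk
  have hμn' : (μ : ℝ) ≤ (n : ℝ) := by exact_mod_cast hμn
  -- Step (A) : k + μ ≤ D₁ + 2δ + 2
  have hA : (k : ℝ) + μ ≤ (D₁ : ℝ) + 2 * δ + 2 := by
    by_cases hG2 : ((k : ℝ) + μ - D₁) / 2 ≤ 0
    · linarith
    rw [not_le] at hG2
    set t₀ : ℕ := ⌊((k : ℝ) + μ - D₁) / 2⌋₊ with ht₀def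
    have h1 : (t₀ : ℝ) ≤ ((k : ℝ) + μ - D₁) / 2 := by
      rw [ht₀def]
      exact Nat.floor_le (le_of_lt hG2)
    have ht₀k : t₀ ≤ k := by
      have : (t₀ : ℝ) ≤ k := by linarith
      exact_mod_cast this
    have ht₀μ : t₀ ≤ μ := by
      have : (t₀ : ℝ) ≤ μ := by linarith
      exact_mod_cast this
    have hT1 : (wordDist S (f (k - t₀)) (c⁻¹ * q t₀) : ℝ) ≤ δ := by
      apply myThin hSsym hSgen hhyp 1 (c⁻¹ * u) c⁻¹ (fun s => f (k - s))
        (fun s => c⁻¹ * q s) k μ hz1 hz2 (by simpa using hfk)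
        (by simp [hf0]) (myGeoRev hSsym hSgen hfgeo) (by simp [hq0])
        (by simp [hqμ]) (myGeoTrans c⁻¹ hqgeo) t₀ ht₀k ht₀μ ?_
      rw [← hD₁def]
      linarith
    have hM1 := (hM t₀ ht₀μ).1
    have htri := myDistTri hSsym hSgen 1 (f (k - t₀)) (c⁻¹ * q t₀)
    have hdist1 : wordDist S 1 (f (k - t₀)) = k - t₀ := by
      have := hfgeo 0 (k - t₀) (Nat.zero_le _) (by omega)
      rw [hf0] at this
      simpa using this
    have hsub : ((k - t₀ : ℕ) : ℝ) = (k : ℝ) - t₀ := by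
      push_cast [Nat.cast_sub ht₀k]
      ring
    have hchain : (k : ℝ) ≤ ((k : ℝ) - t₀) + δ := by
      have c1 : (k : ℝ) ≤ (wordDist S 1 (c⁻¹ * q t₀) : ℝ) := by exact_mod_cast hM1
      have c2 : (wordDist S 1 (c⁻¹ * q t₀) : ℝ) ≤
          (wordDist S 1 (f (k - t₀)) : ℝ) + (wordDist S (f (k - t₀)) (c⁻¹ * q t₀) : ℝ) := by
        exact_mod_cast htri
      rw [hdist1] at c2
      rw [hsub] at c2
      linarith
    have hfloor := Nat.lt_floor_add_one (((k : ℝ) + μ - D₁) / 2)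
    rw [← ht₀def] at hfloor
    linarith
  -- main case analysis
  set G₃ : ℝ := ((D₁ : ℝ) + k - n) / 2 with hG₃def
  by_cases hG3neg : G₃ < 0
  · push_cast
    rw [hG₃def] at hG3neg
    linarith
  rw [not_lt] at hG3neg
  by_cases hμbig : 3 * Δ + 3 ≤ μ
  · -- large μ case
    by_cases hG3small : G₃ ≤ 2 * δ + 1
    · push_cast
      rw [hG₃def] at hG3small
      linarith
    rw [not_le] at hG3small
    exfalso
    have hμbig' : (3 * (Δ : ℝ) + 3) ≤ (μ : ℝ) := by exact_mod_cast hμbig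
    have hW : (2 : ℝ) * δ + 2 ≤ ((D₁ : ℝ) + μ - k) / 2 := by linarith
    set t₀ : ℕ := ⌊min G₃ (((D₁ : ℝ) + μ - k) / 2)⌋₊ with ht₀def
    have hminpos : (0 : ℝ) ≤ min G₃ (((D₁ : ℝ) + μ - k) / 2) :=
      le_min (by linarith) (by linarith)
    have ht₀le : (t₀ : ℝ) ≤ min G₃ (((D₁ : ℝ) + μ - k) / 2) := by
      rw [ht₀def]
      exact Nat.floor_le hminpos
    have ht₀G₃ : (t₀ : ℝ) ≤ ((D₁ : ℝ) + k - n) / 2 := by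
      have := ht₀le.trans (min_le_left _ _)
      rw [hG₃def] at this
      exact this
    have ht₀W : (t₀ : ℝ) ≤ ((D₁ : ℝ) + μ - k) / 2 := ht₀le.trans (min_le_right _ _)
    have ht₀μ : t₀ ≤ μ := by
      have : (t₀ : ℝ) ≤ μ := by linarith
      exact_mod_cast this
    have ht₀k : t₀ ≤ k := by
      have : (t₀ : ℝ) ≤ k := by linarith
      exact_mod_cast this
    have ht₀D₁ : t₀ ≤ D₁ := by
      have : (t₀ : ℝ) ≤ D₁ := by linarith
      exact_mod_cast this
    have hT3 : (wordDist S (e (D₁ - t₀)) (c⁻¹ * q (μ - t₀)) : ℝ) ≤ δ := by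
      apply myThin hSsym hSgen hhyp 1 c⁻¹ (c⁻¹ * u) (fun s => e (D₁ - s))
        (fun s => c⁻¹ * q (μ - s)) D₁ μ hz3 hz4 (by simpa using heD)
        (by simp [he0]) (myGeoRev hSsym hSgen hegeo) (by simp [hqμ])
        (by simp [hq0]) (myGeoRev hSsym hSgen (myGeoTrans c⁻¹ hqgeo)) t₀ ht₀D₁ ht₀μ ?_
      rw [hz7]
      linarith
    have hT4 : (wordDist S (e (D₁ - t₀)) (r (k - t₀)) : ℝ) ≤ δ := by
      apply myThin hSsym hSgen hhyp 1 h (c⁻¹ * u) (fun s => e (D₁ - s))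
        (fun s => r (k - s)) D₁ k hz3 hz5 (by simpa using heD) (by simp [he0])
        (myGeoRev hSsym hSgen hegeo) (by simpa using hrk) (by simp [hr0])
        (myGeoRev hSsym hSgen hrgeo) t₀ ht₀D₁ ht₀k ?_
      rw [hz9]
      linarith
    have htri : (wordDist S (r (k - t₀)) (c⁻¹ * q (μ - t₀)) : ℝ) ≤ 2 * δ := by
      have t1 := myDistTri hSsym hSgen (r (k - t₀)) (e (D₁ - t₀)) (c⁻¹ * q (μ - t₀))
      have s1 := myDistSymm hSsym hSgen (r (k - t₀)) (e (D₁ - t₀))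
      rw [s1] at t1
      have c1 : (wordDist S (r (k - t₀)) (c⁻¹ * q (μ - t₀)) : ℝ) ≤
          (wordDist S (e (D₁ - t₀)) (r (k - t₀)) : ℝ) +
          (wordDist S (e (D₁ - t₀)) (c⁻¹ * q (μ - t₀)) : ℝ) := by exact_mod_cast t1
      linarith
    have hM2 := (hM (μ - t₀) (by omega)).2
    have hdistr : wordDist S h (r (k - t₀)) = k - t₀ := by
      have := hrgeo 0 (k - t₀) (Nat.zero_le _) (by omega)
      rw [hr0] at this
      simpa using this
    have htri2 := myDistTri hSsym hSgen h (r (k - t₀)) (c⁻¹ * q (μ - t₀))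
    have hsub : ((k - t₀ : ℕ) : ℝ) = (k : ℝ) - t₀ := by
      push_cast [Nat.cast_sub ht₀k]
      ring
    have hchain : (k : ℝ) ≤ ((k : ℝ) - t₀) + 2 * δ := by
      have c1 : (k : ℝ) ≤ (wordDist S h (c⁻¹ * q (μ - t₀)) : ℝ) := by exact_mod_cast hM2
      have c2 : (wordDist S h (c⁻¹ * q (μ - t₀)) : ℝ) ≤
          (wordDist S h (r (k - t₀)) : ℝ) +
          (wordDist S (r (k - t₀)) (c⁻¹ * q (μ - t₀)) : ℝ) := by exact_mod_cast htri2
      rw [hdistr] at c2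
      rw [hsub] at c2
      linarith
    have hfloor := Nat.lt_floor_add_one (min G₃ (((D₁ : ℝ) + μ - k) / 2))
    rw [← ht₀def] at hfloor
    have hlb : (2 : ℝ) * δ + 1 < min G₃ (((D₁ : ℝ) + μ - k) / 2) :=
      lt_min (by linarith) (by linarith)
    linarith
  · -- small μ case
    have hμsmall : μ ≤ 3 * Δ + 2 := by omega
    have hkD : k ≤ D₁ + 2 * Δ + 2 := by
      have hc : (k : ℝ) ≤ (D₁ : ℝ) + 2 * (Δ : ℝ) + 2 := by
        have h0 : (0 : ℝ) ≤ (μ : ℝ) := Nat.cast_nonneg μ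
        linarith
      exact_mod_cast hc
    set T : ℕ := ⌊G₃⌋₊ with hTdef
    have hTG₃ : (T : ℝ) ≤ G₃ := by
      rw [hTdef]
      exact Nat.floor_le hG3neg
    set m : ℕ := D₁ + μ - k with hmdef
    have hmcast : (m : ℝ) = (D₁ : ℝ) + μ - k := by
      rw [hmdef, Nat.cast_sub hkD₁μ]
      push_cast
      ring
    set tlo : ℕ := (m + 1) / 2 with htlodef
    -- facts about indices in range
    have hIcc : ∀ t, tlo ≤ t → t ≤ T → t ≤ D₁ ∧ t ≤ k ∧ m ≤ 2 * t ∧ D₁ - t ≤ k := by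
      intro t h1 h2
      have hc : (t : ℝ) ≤ G₃ := le_trans (by exact_mod_cast h2) hTG₃
      rw [hG₃def] at hc
      have hc2 : 2 * t + n ≤ D₁ + k := by
        have : 2 * (t : ℝ) + n ≤ (D₁ : ℝ) + k := by linarith
        exact_mod_cast this
      omega
    -- the splice injectivity
    have hsplice : ∀ i₁ i₂ : ℕ, i₂ < i₁ → i₁ ≤ k →
        (f i₁)⁻¹ * h * f i₁ = (f i₂)⁻¹ * h * f i₂ → False := by
      intro i₁ i₂ hlt hik heq
      have key : h = (c * f i₁ * (f i₂)⁻¹)⁻¹ * u * (c * f i₁ * (f i₂)⁻¹) := by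
        calc h = f i₂ * ((f i₂)⁻¹ * h * f i₂) * (f i₂)⁻¹ := by group
          _ = f i₂ * ((f i₁)⁻¹ * h * f i₁) * (f i₂)⁻¹ := by rw [heq]
          _ = (c * f i₁ * (f i₂)⁻¹)⁻¹ * u * (c * f i₁ * (f i₂)⁻¹) := by rw [hconj]; group
      have h1 := hmin _ _ key hu
      have ha : wordLength S (c * f i₁) = k - i₁ := by
        have e1 : wordLength S (c * f i₁) = wordDist S (f i₁) c⁻¹ := by
          unfold wordDist
          rw [← myWLinv hSsym hSgen (c * f i₁)]
          congr 1
          group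
        rw [e1, ← hfk]
        exact hfgeo i₁ k hik le_rfl
      have hb : wordLength S ((f i₂)⁻¹) = i₂ := by
        rw [myWLinv hSsym hSgen]
        have := hfgeo 0 i₂ (Nat.zero_le _) (by omega)
        rw [hf0, myDistOne] at this
        simpa using this
      have h2 := myWLmul hSsym hSgen (c * f i₁) ((f i₂)⁻¹)
      rw [ha, hb] at h2
      omega
    -- membership in the ball
    have hmem : ∀ t ∈ Finset.Icc tlo T,
        (fun t => (f (D₁ - t))⁻¹ * h * f (D₁ - t)) t ∈ hball.toFinset := by
      intro t ht
      rw [Finset.mem_Icc] at ht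
      obtain ⟨htD₁, htk, htm, hik⟩ := hIcc t ht.1 ht.2
      have hc : (t : ℝ) ≤ G₃ := le_trans (by exact_mod_cast ht.2) hTG₃
      have hT4 : (wordDist S (e (D₁ - t)) (r (k - t)) : ℝ) ≤ δ := by
        apply myThin hSsym hSgen hhyp 1 h (c⁻¹ * u) (fun s => e (D₁ - s))
          (fun s => r (k - s)) D₁ k hz3 hz5 (by simpa using heD) (by simp [he0])
          (myGeoRev hSsym hSgen hegeo) (by simpa using hrk) (by simp [hr0])
          (myGeoRev hSsym hSgen hrgeo) t htD₁ htk ?_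
        rw [hz9]
        rw [hG₃def] at hc
        linarith
      have hiD₁ : D₁ - t ≤ D₁ := by omega
      have hicast : ((D₁ - t : ℕ) : ℝ) = (D₁ : ℝ) - t := by
        push_cast [Nat.cast_sub htD₁]
        ring
      have hT5 : (wordDist S (f (D₁ - t)) (e (D₁ - t)) : ℝ) ≤ δ := by
        apply myThin hSsym hSgen hhyp c⁻¹ (c⁻¹ * u) 1 f e k D₁ hz7 hD₁def.symm
          hf0 hfk hfgeo he0 heD hegeo (D₁ - t) hik hiD₁ ?_
        rw [hz2]
        rw [hicast]
        have hm2 : (m : ℝ) ≤ 2 * t := by exact_mod_cast htm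
        rw [hmcast] at hm2
        linarith
      have hjk : k - t ≤ k := by omega
      have hT6 : (wordDist S (f (k - t)) (h⁻¹ * r (k - t)) : ℝ) ≤ δ := by
        apply myThin hSsym hSgen hhyp c⁻¹ c⁻¹ 1 f (fun s => h⁻¹ * r s) k k hz7 hz7
          hf0 hfk hfgeo (by simp [hr0])
          (by show h⁻¹ * r k = c⁻¹; rw [hrk]; exact hcalc)
          (myGeoTrans h⁻¹ hrgeo) (k - t) hjk hjk ?_
        rw [hz8]
        have : ((k - t : ℕ) : ℝ) ≤ (k : ℝ) := by exact_mod_cast hjk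
        push_cast
        linarith
      -- assemble the length bound
      have hLd : wordLength S ((f (D₁ - t))⁻¹ * h * f (D₁ - t)) =
          wordDist S (f (D₁ - t)) (h * f (D₁ - t)) := by
        unfold wordDist
        congr 1
        group
      have tri1 := myDistTri hSsym hSgen (f (D₁ - t)) (e (D₁ - t)) (h * f (D₁ - t))
      have hrw : wordDist S (r (k - t)) (h * f (D₁ - t)) =
          wordDist S (h⁻¹ * r (k - t)) (f (D₁ - t)) := by
        have e1 : r (k - t) = h * (h⁻¹ * r (k - t)) := by group
        conv_lhs => rw [e1]
        rw [myDistLeft]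
      have tri2 := myDistTri hSsym hSgen (e (D₁ - t)) (r (k - t)) (h * f (D₁ - t))
      rw [hrw] at tri2
      have tri3 := myDistTri hSsym hSgen (h⁻¹ * r (k - t)) (f (k - t)) (f (D₁ - t))
      have hsym6 : wordDist S (h⁻¹ * r (k - t)) (f (k - t)) =
          wordDist S (f (k - t)) (h⁻¹ * r (k - t)) :=
        myDistSymm hSsym hSgen _ _
      rw [hsym6] at tri3
      have hfji : wordDist S (f (k - t)) (f (D₁ - t)) ≤ 3 * Δ + 2 := by
        rcases le_total (k - t) (D₁ - t) with hcase | hcase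
        · rw [hfgeo (k - t) (D₁ - t) hcase hik]
          omega
        · rw [myDistSymm hSsym hSgen, hfgeo (D₁ - t) (k - t) hcase hjk]
          omega
      have hfin : wordLength S ((f (D₁ - t))⁻¹ * h * f (D₁ - t)) ≤ R₀ := by
        have c1 : (wordDist S (f (D₁ - t)) (h * f (D₁ - t)) : ℝ) ≤
            (wordDist S (f (D₁ - t)) (e (D₁ - t)) : ℝ) +
            (wordDist S (e (D₁ - t)) (h * f (D₁ - t)) : ℝ) := by exact_mod_cast tri1
        have c2 : (wordDist S (e (D₁ - t)) (h * f (D₁ - t)) : ℝ) ≤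
            (wordDist S (e (D₁ - t)) (r (k - t)) : ℝ) +
            (wordDist S (h⁻¹ * r (k - t)) (f (D₁ - t)) : ℝ) := by exact_mod_cast tri2
        have c3 : (wordDist S (h⁻¹ * r (k - t)) (f (D₁ - t)) : ℝ) ≤
            (wordDist S (f (k - t)) (h⁻¹ * r (k - t)) : ℝ) +
            (wordDist S (f (k - t)) (f (D₁ - t)) : ℝ) := by exact_mod_cast tri3
        have c4 : (wordDist S (f (k - t)) (f (D₁ - t)) : ℝ) ≤ 3 * (Δ : ℝ) + 2 := by
          exact_mod_cast hfji
        have c5 : (wordLength S ((f (D₁ - t))⁻¹ * h * f (D₁ - t)) : ℝ) ≤ (R₀ : ℝ) := by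
          rw [hLd]
          have hR : (R₀ : ℝ) = 6 * (Δ : ℝ) + 2 := by
            rw [hR₀def]
            push_cast
            ring
          rw [hR]
          linarith
        exact_mod_cast c5
      rw [Set.Finite.mem_toFinset]
      exact hfin
    -- injectivity on the range
    have hinjOn : Set.InjOn (fun t => (f (D₁ - t))⁻¹ * h * f (D₁ - t))
        ↑(Finset.Icc tlo T) := by
      intro t₁ ht₁ t₂ ht₂ heq
      rw [Finset.coe_Icc, Set.mem_Icc] at ht₁ ht₂
      obtain ⟨h1D₁, h1k, h1m, h1ik⟩ := hIcc t₁ ht₁.1 ht₁.2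
      obtain ⟨h2D₁, h2k, h2m, h2ik⟩ := hIcc t₂ ht₂.1 ht₂.2
      by_contra hne
      rcases Nat.lt_or_ge t₁ t₂ with hlt | hge
      · exact hsplice (D₁ - t₁) (D₁ - t₂) (by omega) h1ik heq
      · have hlt2 : t₂ < t₁ := by omega
        exact hsplice (D₁ - t₂) (D₁ - t₁) (by omega) h2ik heq.symm
    have hcard := Finset.card_le_card_of_injOn _ hmem hinjOn
    rw [Nat.card_Icc, ← hNdef] at hcard
    have hcount : T + 1 ≤ N + tlo := by omega
    have hTlt : G₃ < (T : ℝ) + 1 := by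
      have := Nat.lt_floor_add_one G₃
      rw [← hTdef] at this
      exact_mod_cast this
    have hcount' : (T : ℝ) + 1 ≤ (N : ℝ) + tlo := by exact_mod_cast hcount
    have htlo' : 2 * (tlo : ℝ) ≤ (m : ℝ) + 1 := by
      have h2 : 2 * tlo ≤ m + 1 := by omega
      exact_mod_cast h2
    rw [hmcast] at htlo'
    have hμs' : (μ : ℝ) ≤ 3 * (Δ : ℝ) + 2 := by exact_mod_cast hμsmall
    rw [hG₃def] at hTlt
    push_cast
    linarith
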